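/- Let j ≥ 1 be a natural number. Let ∂D ⊆ (Fin j → ℂ) be the subspace {z | (∀ i, ‖z i‖ ≤ 1) ∧ (∃ i, ‖z i‖ = 1)} (the boundary of the unit polydisc) and let S ⊆ (Fin j → ℂ) be the subspace {z | ∑ i, ‖z i‖^2 = 1} (the Euclidean unit sphere, i.e. S^{2j−1}). Then there is a homeomorphism e : ∂D → S that is equivariant for the coordinatewise action of the torus (Fin j → Circle), where Circle is the unit circle group in ℂ acting on each coordinate by multiplication: e (t • z) = t • (e z) for all t and z. -/

import Mathlib

/-- The boundary of the unit polydisc in `ℂ^j`. -/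
def polydiscBoundary (j : ℕ) : Set (Fin j → ℂ) :=
  {z | (∀ i, ‖z i‖ ≤ 1) ∧ ∃ i, ‖z i‖ = 1}

/-- The Euclidean unit sphere `S^{2j-1}` in `ℂ^j`. -/
def euclideanSphereSet (j : ℕ) : Set (Fin j → ℂ) :=
  {z | ∑ i, ‖z i‖ ^ 2 = 1}

namespace Stmt6Aux

variable {j : ℕ}

/-- Euclidean norm squared. -/
noncomputable def rsq (z : Fin j → ℂ) : ℝ := ∑ i, ‖z i‖ ^ 2

noncomputable def r (z : Fin j → ℂ) : ℝ := Real.sqrt (rsq z)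

lemma rsq_nonneg (z : Fin j → ℂ) : 0 ≤ rsq z :=
  Finset.sum_nonneg fun i _ => sq_nonneg _

lemma continuous_rsq : Continuous (rsq (j := j)) := by
  unfold rsq
  exact continuous_finset_sum _ fun i _ => ((continuous_apply i).norm.pow 2)

lemma continuous_r : Continuous (r (j := j)) :=
  Real.continuous_sqrt.comp continuous_rsq

lemma r_sq (z : Fin j → ℂ) : r z ^ 2 = rsq z :=
  Real.sq_sqrt (rsq_nonneg z)

lemma one_le_r {z : Fin j → ℂ} (hz : z ∈ polydiscBoundary j) : 1 ≤ r z := by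
  obtain ⟨h1, i, hi⟩ := hz
  have : (1 : ℝ) ≤ rsq z := by
    calc (1 : ℝ) = ‖z i‖ ^ 2 := by rw [hi]; norm_num
    _ ≤ rsq z := Finset.single_le_sum (fun i _ => sq_nonneg ‖z i‖) (Finset.mem_univ i)
  calc (1 : ℝ) = Real.sqrt 1 := by simp
  _ ≤ r z := Real.sqrt_le_sqrt this

lemma r_pos {z : Fin j → ℂ} (hz : z ∈ polydiscBoundary j) : 0 < r z :=
  lt_of_lt_of_le one_pos (one_le_r hz)

-- sup norm facts
lemma norm_apply_le (z : Fin j → ℂ) (i : Fin j) : ‖z i‖ ≤ ‖z‖ :=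
  norm_le_pi_norm z i

lemma sphere_norm_pos {w : Fin j → ℂ} (hw : w ∈ euclideanSphereSet j) : 0 < ‖w‖ := by
  rcases eq_or_ne w 0 with h | h
  · exfalso
    have : rsq w = 1 := hw
    rw [h] at this
    simp [rsq] at this
  · exact norm_pos_iff.mpr h

lemma rsq_smul (a : ℝ) (z : Fin j → ℂ) : rsq (a • z) = a ^ 2 * rsq z := by
  unfold rsq
  rw [Finset.mul_sum]
  congr 1; funext i
  simp [norm_smul, mul_pow, abs_sq]

lemma toFun_mem {z : Fin j → ℂ} (hz : z ∈ polydiscBoundary j) :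
    (r z)⁻¹ • z ∈ euclideanSphereSet j := by
  have hr := r_pos hz
  show rsq _ = 1
  rw [rsq_smul, ← r_sq z]
  field_simp

lemma exists_norm_eq (hj : 1 ≤ j) (w : Fin j → ℂ) : ∃ i, ‖w i‖ = ‖w‖ := by
  haveI : Nonempty (Fin j) := Fin.pos_iff_nonempty.mp hj
  obtain ⟨i, hi⟩ := Finite.exists_max fun i => ‖w i‖
  refine ⟨i, le_antisymm (norm_apply_le w i) ?_⟩
  have : ‖w‖ = ↑(Finset.univ.sup fun b => ‖w b‖₊) := by
    rw [Pi.norm_def]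
  rw [this]
  have : Finset.univ.sup (fun b => ‖w b‖₊) ≤ ‖w i‖₊ :=
    Finset.sup_le fun b _ => hi b
  exact_mod_cast this

lemma invFun_mem (hj : 1 ≤ j) {w : Fin j → ℂ} (hw : w ∈ euclideanSphereSet j) :
    ‖w‖⁻¹ • w ∈ polydiscBoundary j := by
  have hn := sphere_norm_pos hw
  constructor
  · intro i
    rw [Pi.smul_apply, norm_smul, norm_inv, Real.norm_eq_abs, abs_of_pos hn]
    rw [inv_mul_le_one₀ hn]
    exact norm_apply_le w i
  · obtain ⟨i, hi⟩ := exists_norm_eq hj w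
    exact ⟨i, by rw [Pi.smul_apply, norm_smul, norm_inv, Real.norm_eq_abs, abs_of_pos hn, hi,
      inv_mul_cancel₀ hn.ne']⟩

lemma r_smul_nonneg (a : ℝ) (ha : 0 ≤ a) (z : Fin j → ℂ) : r (a • z) = a * r z := by
  unfold r
  rw [rsq_smul, Real.sqrt_mul (sq_nonneg a), Real.sqrt_sq ha]

lemma norm_smul_real (a : ℝ) (ha : 0 ≤ a) (z : Fin j → ℂ) : ‖a • z‖ = a * ‖z‖ := by
  rw [norm_smul, Real.norm_eq_abs, abs_of_nonneg ha]

end Stmt6Aux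

open Stmt6Aux in
/-- The boundary of the unit polydisc `∂((D²)^j)` is homeomorphic to the sphere `S^{2j-1}`,
equivariantly for the coordinatewise action of the torus `(Fin j → Circle)`. -/
theorem stmt6 (j : ℕ) (hj : 1 ≤ j) :
    ∃ e : polydiscBoundary j ≃ₜ euclideanSphereSet j,
      ∀ (t : Fin j → Circle) (z : polydiscBoundary j)
        (hz : t • (z : Fin j → ℂ) ∈ polydiscBoundary j),
        ((e ⟨t • (z : Fin j → ℂ), hz⟩ : euclideanSphereSet j) : Fin j → ℂ) =
          t • ((e z : euclideanSphereSet j) : Fin j → ℂ) := by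
  -- the radial homeomorphism
  refine ⟨{ toFun := fun z => ⟨(r (z : Fin j → ℂ))⁻¹ • (z : Fin j → ℂ), toFun_mem z.2⟩
            invFun := fun w => ⟨‖(w : Fin j → ℂ)‖⁻¹ • (w : Fin j → ℂ), invFun_mem hj w.2⟩
            left_inv := ?_
            right_inv := ?_
            continuous_toFun := ?_
            continuous_invFun := ?_ }, ?_⟩
  · rintro ⟨z, hz⟩
    have hr := r_pos hz
    ext1
    simp only
    rw [norm_smul_real _ (inv_nonneg.mpr hr.le), smul_smul]
    have hz1 : ‖z‖ = 1 := by
      obtain ⟨h1, i, hi⟩ := hz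
      refine le_antisymm (pi_norm_le_iff_of_nonneg one_pos.le |>.mpr h1) ?_
      rw [← hi]; exact norm_apply_le z i
    rw [hz1, mul_one, inv_inv, mul_inv_cancel₀ hr.ne', one_smul]
  · rintro ⟨w, hw⟩
    have hn := sphere_norm_pos hw
    ext1
    simp only
    rw [r_smul_nonneg _ (inv_nonneg.mpr hn.le), smul_smul]
    have hrw : r w = 1 := by
      unfold r; rw [show rsq w = 1 from hw]; simp
    rw [hrw, mul_one, inv_inv, mul_inv_cancel₀ hn.ne', one_smul]
  · refine Continuous.subtype_mk ?_ _
    exact ((continuous_r.comp continuous_subtype_val).inv₀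
      (fun z => (r_pos z.2).ne')).smul continuous_subtype_val
  · refine Continuous.subtype_mk ?_ _
    exact ((continuous_norm.comp continuous_subtype_val).inv₀
      (fun w => (sphere_norm_pos w.2).ne')).smul continuous_subtype_val
  · rintro t ⟨z, hz⟩ hz'
    show (r (t • z))⁻¹ • (t • z) = t • ((r z)⁻¹ • z)
    have hr : rsq (t • z) = rsq z := by
      unfold rsq
      congr 1; funext i
      simp [Pi.smul_apply, Circle.smul_def, norm_mul, Circle.norm_coe]
    have : r (t • z) = r z := by unfold r; rw [hr]
    rw [this]
    ext i
    simp [Pi.smul_apply, Circle.smul_def]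
    ring
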